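/- Fix N ≥ 4, u ∈ (0,1), λ_f > 0 and a total observation window T with T > (N−3)·(u/λ_f)·log 2. Suppose T_a, T_b > 0 satisfy e^{−λ_f T_a/u} = e^{−λ_f T_b/u}/(1 − e^{−λ_f T_b/u}) and 2·T_a + (N−3)·T_b = T. Then the inter-sample time sequence 𝒯* with T*_1 = T*_{N−1} = T_a and T*_n = T_b for 2 ≤ n ≤ N−2 minimizes V_{ũ_a,N}(𝒯) over all 𝒯 = (T_1,…,T_{N−1}) with T_n ≥ 0 for all n and ∑_{n=1}^{N−1} T_n = T; that is, V_{ũ_a,N}(𝒯*) ≤ V_{ũ_a,N}(𝒯) for every such feasible 𝒯. -/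

import Mathlib

open Finset

/-- Closed form for the mean squared error of the averaging duty-cycle estimator
with `N` samples and inter-sample times `T 1, …, T (N-1)`. -/
noncomputable def Vavg (u lf : ℝ) (N : ℕ) (T : ℕ → ℝ) : ℝ :=
  u * (1 - u) / (N : ℝ) + 2 * u * (1 - u) / (N : ℝ) ^ 2 *
    ∑ i ∈ Finset.Icc 1 (N - 1), ∑ j ∈ Finset.Icc 1 (N - i),
      ∏ k ∈ Finset.Icc j (i + j - 1), Real.exp (-(lf * T k) / u)


lemma opt_reindex (M : ℕ) (F : ℕ → ℕ → ℝ) :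
    ∑ i ∈ Icc 1 M, ∑ j ∈ Icc 1 (M + 1 - i), F j (i + j - 1)
      = ∑ a ∈ Icc 1 M, ∑ b ∈ Icc a M, F a b := by
  rw [Finset.sum_sigma', Finset.sum_sigma']
  refine Finset.sum_nbij' (fun x => ⟨x.2, x.1 + x.2 - 1⟩) (fun y => ⟨y.2 + 1 - y.1, y.1⟩)
    ?_ ?_ ?_ ?_ ?_
  · rintro ⟨i, j⟩ h
    simp only [Finset.mem_sigma, Finset.mem_Icc] at h ⊢
    omega
  · rintro ⟨a, b⟩ h
    simp only [Finset.mem_sigma, Finset.mem_Icc] at h ⊢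
    omega
  · rintro ⟨i, j⟩ h
    simp only [Finset.mem_sigma, Finset.mem_Icc] at h
    simp only [Sigma.mk.inj_iff, heq_eq_eq]
    exact ⟨by omega, trivial⟩
  · rintro ⟨a, b⟩ h
    simp only [Finset.mem_sigma, Finset.mem_Icc] at h
    simp only [Sigma.mk.inj_iff, heq_eq_eq]
    exact ⟨trivial, by omega⟩
  · rintro ⟨i, j⟩ h
    rfl

lemma opt_swap (M : ℕ) (W : ℕ → ℕ → ℝ) (d : ℕ → ℝ) :
    ∑ a ∈ Icc 1 M, ∑ b ∈ Icc a M, W a b * ∑ m ∈ Icc a b, d m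
      = ∑ m ∈ Icc 1 M, d m * ∑ a ∈ Icc 1 m, ∑ b ∈ Icc m M, W a b := by
  have h1 : ∀ a ∈ Icc 1 M, ∀ b ∈ Icc a M,
      W a b * ∑ m ∈ Icc a b, d m
        = ∑ m ∈ Icc 1 M, if m ∈ Icc a b then W a b * d m else 0 := by
    intro a ha b hb
    rw [Finset.sum_ite_mem, Finset.inter_eq_right.mpr, Finset.mul_sum]
    intro x hx
    simp only [Finset.mem_Icc] at *
    omega
  calc ∑ a ∈ Icc 1 M, ∑ b ∈ Icc a M, W a b * ∑ m ∈ Icc a b, d m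
      = ∑ a ∈ Icc 1 M, ∑ b ∈ Icc a M, ∑ m ∈ Icc 1 M,
          if m ∈ Icc a b then W a b * d m else 0 :=
        Finset.sum_congr rfl fun a ha => Finset.sum_congr rfl fun b hb => h1 a ha b hb
    _ = ∑ m ∈ Icc 1 M, ∑ a ∈ Icc 1 M, ∑ b ∈ Icc a M,
          if m ∈ Icc a b then W a b * d m else 0 := by
        rw [show (∑ a ∈ Icc 1 M, ∑ b ∈ Icc a M, ∑ m ∈ Icc 1 M,
            if m ∈ Icc a b then W a b * d m else 0)
          = ∑ a ∈ Icc 1 M, ∑ m ∈ Icc 1 M, ∑ b ∈ Icc a M,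
            if m ∈ Icc a b then W a b * d m else 0 from
          Finset.sum_congr rfl fun a _ => Finset.sum_comm]
        exact Finset.sum_comm
    _ = ∑ m ∈ Icc 1 M, d m * ∑ a ∈ Icc 1 m, ∑ b ∈ Icc m M, W a b := by
        refine Finset.sum_congr rfl fun m hm => ?_
        simp only [Finset.mem_Icc] at hm
        have hstep : ∀ a ∈ Icc 1 M,
            (∑ b ∈ Icc a M, if m ∈ Icc a b then W a b * d m else 0)
              = if a ≤ m then d m * ∑ b ∈ Icc m M, W a b else 0 := by
          intro a ha
          by_cases ham : a ≤ m
          · rw [if_pos ham]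
            have hfil : Finset.filter (fun b => m ∈ Icc a b) (Icc a M) = Icc m M := by
              ext b
              simp only [Finset.mem_filter, Finset.mem_Icc]
              omega
            rw [← Finset.sum_filter, hfil, Finset.mul_sum]
            exact Finset.sum_congr rfl fun b _ => mul_comm _ _
          · rw [if_neg ham]
            refine Finset.sum_eq_zero fun b hb => ?_
            rw [if_neg]
            simp only [Finset.mem_Icc]
            omega
        rw [Finset.sum_congr rfl hstep, ← Finset.sum_filter,
          show Finset.filter (fun a => a ≤ m) (Icc 1 M) = Icc 1 m by
            ext a; simp only [Finset.mem_filter, Finset.mem_Icc]; omega,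
          ← Finset.mul_sum]

lemma opt_L (M : ℕ) (hM : 3 ≤ M) (p : ℝ) (hp : 0 < p) (hp1 : p < 1) (e : ℕ → ℝ)
    (he : ∀ m, e m = if m = 1 ∨ m = M then p / (1 - p) else p) :
    ∀ k, 1 ≤ k → k ≤ M - 1 → ∑ a ∈ Icc 1 k, ∏ m ∈ Icc a k, e m = p / (1 - p) := by
  have h1p : (1 : ℝ) - p ≠ 0 := by linarith
  intro k hk1
  induction k, hk1 using Nat.le_induction with
  | base =>
    intro _
    simp [he, (by omega : (1:ℕ) ≠ M)]
  | succ k hk ih =>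
    intro hkM
    have hek : e (k + 1) = p := by
      rw [he, if_neg (by omega)]
    rw [Finset.sum_Icc_succ_top (by omega)]
    have hprod : ∀ a ∈ Icc 1 k, ∏ m ∈ Icc a (k+1), e m = (∏ m ∈ Icc a k, e m) * p := by
      intro a ha
      simp only [Finset.mem_Icc] at ha
      rw [Finset.prod_Icc_succ_top (by omega), hek]
    rw [Finset.sum_congr rfl hprod, ← Finset.sum_mul, ih (by omega),
      Finset.Icc_self, Finset.prod_singleton, hek]
    field_simp
    ring

lemma opt_LM (M : ℕ) (hM : 3 ≤ M) (p : ℝ) (hp : 0 < p) (hp1 : p < 1) (e : ℕ → ℝ)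
    (he : ∀ m, e m = if m = 1 ∨ m = M then p / (1 - p) else p) :
    ∑ a ∈ Icc 1 M, ∏ m ∈ Icc a M, e m = p / (1 - p) ^ 2 := by
  have h1p : (1 : ℝ) - p ≠ 0 := by linarith
  obtain ⟨m, rfl⟩ : ∃ m', M = m' + 1 := ⟨M - 1, by omega⟩
  have hem : e (m + 1) = p / (1 - p) := by rw [he, if_pos (Or.inr rfl)]
  rw [Finset.sum_Icc_succ_top (by omega)]
  have hprod : ∀ a ∈ Icc 1 m, ∏ x ∈ Icc a (m+1), e x = (∏ x ∈ Icc a m, e x) * (p / (1 - p)) := by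
    intro a ha
    simp only [Finset.mem_Icc] at ha
    rw [Finset.prod_Icc_succ_top (by omega), hem]
  rw [Finset.sum_congr rfl hprod, ← Finset.sum_mul,
    opt_L (m+1) hM p hp hp1 e he m (by omega) (by omega),
    Finset.Icc_self, Finset.prod_singleton, hem]
  field_simp
  ring

lemma opt_R (M : ℕ) (hM : 3 ≤ M) (p : ℝ) (hp : 0 < p) (hp1 : p < 1) (e : ℕ → ℝ)
    (he : ∀ m, e m = if m = 1 ∨ m = M then p / (1 - p) else p) :
    ∀ d k, k + d = M → 1 ≤ k →
      ∑ b ∈ Icc k M, ∏ m ∈ Icc (k+1) b, e m = if d = 0 then 1 else 1 / (1 - p) := by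
  have h1p : (1 : ℝ) - p ≠ 0 := by linarith
  intro d
  induction d with
  | zero =>
    intro k hk _
    have : k = M := by omega
    subst this
    rw [Finset.Icc_self, Finset.sum_singleton,
      Finset.Icc_eq_empty (by omega), Finset.prod_empty, if_pos rfl]
  | succ n ih =>
    intro k hk hk1
    have hsplit : Icc k M = insert k (Icc (k+1) M) := by
      ext x
      simp only [Finset.mem_insert, Finset.mem_Icc]
      omega
    rw [hsplit, Finset.sum_insert (by simp),
      show Finset.Icc (k+1) k = (∅ : Finset ℕ) from Finset.Icc_eq_empty (by omega),
      Finset.prod_empty]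
    have hstep : ∀ b ∈ Icc (k+1) M, ∏ m ∈ Icc (k+1) b, e m
        = e (k+1) * ∏ m ∈ Icc (k+2) b, e m := by
      intro b hb
      simp only [Finset.mem_Icc] at hb
      have hins : Icc (k+1) b = insert (k+1) (Icc (k+2) b) := by
        ext x
        simp only [Finset.mem_insert, Finset.mem_Icc]
        omega
      rw [hins, Finset.prod_insert (by simp)]
    rw [Finset.sum_congr rfl hstep, ← Finset.mul_sum, ih (k+1) (by omega) (by omega)]
    by_cases hn : n = 0
    · subst hn
      rw [if_pos rfl, he, if_pos (Or.inr (by omega)), if_neg (by omega)]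
      field_simp
      ring
    · rw [if_neg hn, he, if_neg (by omega), if_neg (by omega)]
      field_simp
      ring

lemma opt_g (M : ℕ) (hM : 3 ≤ M) (p : ℝ) (hp : 0 < p) (hp1 : p < 1) (e : ℕ → ℝ)
    (he : ∀ m, e m = if m = 1 ∨ m = M then p / (1 - p) else p) :
    ∀ k, 1 ≤ k → k ≤ M →
      (∑ a ∈ Icc 1 k, ∑ b ∈ Icc k M, ∏ m ∈ Icc a b, e m) = p / (1 - p) ^ 2 := by
  have h1p : (1 : ℝ) - p ≠ 0 := by linarith
  intro k hk1 hkM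
  have hsplit : ∀ a ∈ Icc 1 k, ∀ b ∈ Icc k M,
      ∏ m ∈ Icc a b, e m = (∏ m ∈ Icc a k, e m) * ∏ m ∈ Icc (k+1) b, e m := by
    intro a ha b hb
    simp only [Finset.mem_Icc] at ha hb
    have hun : Icc a b = Icc a k ∪ Icc (k+1) b := by
      ext x
      simp only [Finset.mem_union, Finset.mem_Icc]
      omega
    rw [hun, Finset.prod_union]
    refine Finset.disjoint_left.mpr fun x hx hx' => ?_
    simp only [Finset.mem_Icc] at hx hx'
    omega
  have hfact : (∑ a ∈ Icc 1 k, ∑ b ∈ Icc k M, ∏ m ∈ Icc a b, e m)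
      = (∑ a ∈ Icc 1 k, ∏ m ∈ Icc a k, e m) * ∑ b ∈ Icc k M, ∏ m ∈ Icc (k+1) b, e m := by
    rw [Finset.sum_mul_sum]
    exact Finset.sum_congr rfl fun a ha => Finset.sum_congr rfl fun b hb => hsplit a ha b hb
  rw [hfact]
  rcases eq_or_lt_of_le hkM with hkM' | hkM'
  · subst hkM'
    rw [opt_LM k hM p hp hp1 e he,
      opt_R k hM p hp hp1 e he 0 k (by omega) hk1, if_pos rfl, mul_one]
  · rw [opt_L M hM p hp hp1 e he k hk1 (by omega),
      opt_R M hM p hp hp1 e he (M - k) k (by omega) hk1, if_neg (by omega),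
      div_mul_div_comm, mul_one, sq]

/-- optimality of the inter-sample time sequence with
`T*_1 = T*_{N-1} = T_a` and `T*_n = T_b` otherwise, when
`e^{-λ_f T_a/u} = e^{-λ_f T_b/u} / (1 - e^{-λ_f T_b/u})`,
`2 T_a + (N-3) T_b = T` and `T > (N-3)(u/λ_f) log 2`. -/
theorem optimal_intersample_times (N : ℕ) (hN : 4 ≤ N) (u lf : ℝ)
    (hu : 0 < u) (hu1 : u < 1) (hlf : 0 < lf) (T Ta Tb : ℝ)
    (hTwin : ((N : ℝ) - 3) * (u / lf) * Real.log 2 < T)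
    (hTa : 0 < Ta) (hTb : 0 < Tb)
    (hgamma : Real.exp (-(lf * Ta) / u)
      = Real.exp (-(lf * Tb) / u) / (1 - Real.exp (-(lf * Tb) / u)))
    (hsum : 2 * Ta + ((N : ℝ) - 3) * Tb = T) :
    ∀ T' : ℕ → ℝ, (∀ k, 0 ≤ T' k) → (∑ k ∈ Finset.Icc 1 (N - 1), T' k = T) →
      Vavg u lf N (fun k => if k = 1 ∨ k = N - 1 then Ta else Tb) ≤ Vavg u lf N T' := by
  intro T' hT'0 hT'sum
  obtain ⟨M, rfl⟩ : ∃ M, N = M + 1 := ⟨N - 1, by omega⟩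
  have hM : 3 ≤ M := by omega
  simp only [Nat.add_sub_cancel] at hT'sum ⊢
  set p := Real.exp (-(lf * Tb) / u) with hpdef
  have hp : 0 < p := Real.exp_pos _
  have hp1 : p < 1 := by
    rw [hpdef]
    apply Real.exp_lt_one_iff.mpr
    apply div_neg_of_neg_of_pos _ hu
    nlinarith
  have h1p : (0:ℝ) < 1 - p := by linarith
  -- the candidate sequence
  set Ts : ℕ → ℝ := fun k => if k = 1 ∨ k = M then Ta else Tb with hTsdef
  -- exp values of the candidate
  set e : ℕ → ℝ := fun m => Real.exp (-(lf * Ts m) / u) with hedef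
  have he : ∀ m, e m = if m = 1 ∨ m = M then p / (1 - p) else p := by
    intro m
    by_cases h : m = 1 ∨ m = M
    · rw [hedef]
      simp only [hTsdef, if_pos h]
      rw [← hgamma]
    · rw [hedef]
      simp only [hTsdef, if_neg h, if_neg h, hpdef]
  -- sums of the sequences
  have hTssum : ∑ m ∈ Icc 1 M, Ts m = T := by
    rw [hTsdef]
    rw [Finset.sum_ite]
    rw [show Finset.filter (fun m => m = 1 ∨ m = M) (Icc 1 M) = {1, M} by
      ext x; simp only [Finset.mem_filter, Finset.mem_Icc, Finset.mem_insert,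
        Finset.mem_singleton]; omega]
    rw [show Finset.filter (fun m => ¬(m = 1 ∨ m = M)) (Icc 1 M) = Icc 2 (M - 1) by
      ext x; simp only [Finset.mem_filter, Finset.mem_Icc]; omega]
    rw [Finset.sum_const, Finset.sum_const, Nat.card_Icc,
      Finset.card_insert_of_notMem (by simp; omega), Finset.card_singleton]
    rw [nsmul_eq_mul, nsmul_eq_mul]
    have hc : ((M - 1 + 1 - 2 : ℕ) : ℝ) = (M : ℝ) - 2 := by
      have : (M - 1 + 1 - 2 : ℕ) = M - 2 := by omega
      rw [this]
      push_cast [Nat.cast_sub (by omega : 2 ≤ M)]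
      ring
    rw [hc]
    push_cast at hsum ⊢
    linarith
  -- difference function
  set δ : ℕ → ℝ := fun m => lf * Ts m / u - lf * T' m / u with hδdef
  have hδsum : ∑ m ∈ Icc 1 M, δ m = 0 := by
    rw [hδdef]
    rw [Finset.sum_sub_distrib]
    have e1 : ∑ m ∈ Icc 1 M, lf * Ts m / u = lf * T / u := by
      rw [← hTssum, Finset.mul_sum, Finset.sum_div]
    have e2 : ∑ m ∈ Icc 1 M, lf * T' m / u = lf * T / u := by
      rw [← hT'sum, Finset.mul_sum, Finset.sum_div]
    rw [e1, e2, sub_self]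
  -- main inequality on the double sums, in (a,b) coordinates
  have hkey : ∀ a b : ℕ,
      (∏ m ∈ Icc a b, e m) * (1 + ∑ m ∈ Icc a b, δ m)
        ≤ ∏ m ∈ Icc a b, Real.exp (-(lf * T' m) / u) := by
    intro a b
    rw [hedef]
    rw [← Real.exp_sum, ← Real.exp_sum]
    set A := ∑ m ∈ Icc a b, -(lf * Ts m) / u with hA
    set B := ∑ m ∈ Icc a b, -(lf * T' m) / u with hB
    have hδeq : ∑ m ∈ Icc a b, δ m = B - A := by
      rw [hδdef, hA, hB, ← Finset.sum_sub_distrib]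
      refine Finset.sum_congr rfl fun m _ => ?_
      ring
    rw [hδeq]
    have h1 : 1 + (B - A) ≤ Real.exp (B - A) := by
      have := Real.add_one_le_exp (B - A)
      linarith
    calc Real.exp A * (1 + (B - A)) ≤ Real.exp A * Real.exp (B - A) := by
          apply mul_le_mul_of_nonneg_left h1 (le_of_lt (Real.exp_pos A))
      _ = Real.exp B := by rw [← Real.exp_add]; ring_nf
  -- sum the per-interval inequalities
  have hS : (∑ a ∈ Icc 1 M, ∑ b ∈ Icc a M, ∏ m ∈ Icc a b, e m)
      ≤ ∑ a ∈ Icc 1 M, ∑ b ∈ Icc a M, ∏ m ∈ Icc a b, Real.exp (-(lf * T' m) / u) := by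
    have hlin : ∑ a ∈ Icc 1 M, ∑ b ∈ Icc a M,
        (∏ m ∈ Icc a b, e m) * ∑ m ∈ Icc a b, δ m = 0 := by
      rw [opt_swap]
      have : ∀ m ∈ Icc 1 M,
          δ m * (∑ a ∈ Icc 1 m, ∑ b ∈ Icc m M, ∏ x ∈ Icc a b, e x)
            = δ m * (p / (1 - p) ^ 2) := by
        intro m hm
        simp only [Finset.mem_Icc] at hm
        rw [opt_g M hM p hp hp1 e he m hm.1 hm.2]
      rw [Finset.sum_congr rfl this, ← Finset.sum_mul, hδsum, zero_mul]
    have expand : ∀ a b : ℕ,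
        (∏ m ∈ Icc a b, e m) + (∏ m ∈ Icc a b, e m) * (∑ m ∈ Icc a b, δ m)
          = (∏ m ∈ Icc a b, e m) * (1 + ∑ m ∈ Icc a b, δ m) := by
      intro a b; ring
    calc (∑ a ∈ Icc 1 M, ∑ b ∈ Icc a M, ∏ m ∈ Icc a b, e m)
        = ∑ a ∈ Icc 1 M, ∑ b ∈ Icc a M,
            ((∏ m ∈ Icc a b, e m) + (∏ m ∈ Icc a b, e m) * ∑ m ∈ Icc a b, δ m) := by
          have : ∑ a ∈ Icc 1 M, ∑ b ∈ Icc a M,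
              ((∏ m ∈ Icc a b, e m) + (∏ m ∈ Icc a b, e m) * ∑ m ∈ Icc a b, δ m)
            = (∑ a ∈ Icc 1 M, ∑ b ∈ Icc a M, ∏ m ∈ Icc a b, e m)
              + ∑ a ∈ Icc 1 M, ∑ b ∈ Icc a M,
                  (∏ m ∈ Icc a b, e m) * ∑ m ∈ Icc a b, δ m := by
            rw [← Finset.sum_add_distrib]
            exact Finset.sum_congr rfl fun a _ => by rw [← Finset.sum_add_distrib]
          rw [this, hlin, add_zero]
      _ = ∑ a ∈ Icc 1 M, ∑ b ∈ Icc a M,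
            (∏ m ∈ Icc a b, e m) * (1 + ∑ m ∈ Icc a b, δ m) := by
          exact Finset.sum_congr rfl fun a _ => Finset.sum_congr rfl fun b _ => expand a b
      _ ≤ _ := Finset.sum_le_sum fun a _ => Finset.sum_le_sum fun b _ => hkey a b
  -- conclude
  unfold Vavg
  simp only [Nat.add_sub_cancel]
  apply add_le_add le_rfl
  have hcoef : (0:ℝ) ≤ 2 * u * (1 - u) / ((M + 1 : ℕ) : ℝ) ^ 2 := by
    apply div_nonneg _ (by positivity)
    nlinarith
  apply mul_le_mul_of_nonneg_left _ hcoef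
  rw [opt_reindex M (fun a b => ∏ m ∈ Icc a b, Real.exp (-(lf * T' m) / u)),
    opt_reindex M (fun a b => ∏ m ∈ Icc a b, Real.exp
      (-(lf * (if m = 1 ∨ m = M then Ta else Tb)) / u))]
  exact hS
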